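/- Let n ≥ 3 and for λ > 1 define s(λ) = ∫_{𝕊ⁿ} (λ − cos d₀)^(2−n) dv, where d₀ is the distance to a fixed point on the unit sphere 𝕊ⁿ. Then s satisfies the ODE [s''(λ)/((n−2)(n−1))]^((n−2)/n) = (2/n)ω_n^(−2/n)·[((1−λ²)/(2(n−1)))s''(λ) − λ s'(λ) + s(λ)] for all λ > 1, where ω_n = Vol(𝕊ⁿ). -/

import Mathlib

open MeasureTheory Real

/-- s(λ) = ∫_{𝕊ⁿ}(λ − cos d₀)^(2−n) dv, computed in polar coordinates about the
basepoint: Vol(𝕊^{n−1})·∫₀^π (λ − cos ρ)^(2−n) sin^{n−1}ρ dρ, with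
Vol(𝕊^{n−1}) = n·ω̃_n. -/
noncomputable def sFun (n : ℕ) (lam : ℝ) : ℝ :=
  ((n : ℝ) * (volume (Metric.ball (0 : EuclideanSpace ℝ (Fin n)) 1)).toReal) *
    ∫ ρ in (0:ℝ)..Real.pi, ((lam - Real.cos ρ) ^ (n - 2))⁻¹ * Real.sin ρ ^ (n - 1)

/-- ω_n = Vol(𝕊ⁿ, g₀). -/
noncomputable def sphereVol (n : ℕ) : ℝ :=
  ((n : ℝ) * (volume (Metric.ball (0 : EuclideanSpace ℝ (Fin n)) 1)).toReal) *
    ∫ t in (0:ℝ)..Real.pi, Real.sin t ^ (n - 1)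

section Stmt8Aux
open intervalIntegral

noncomputable def Ik (n k : ℕ) (mu : ℝ) : ℝ :=
  ∫ ρ in (0:ℝ)..Real.pi, ((mu - Real.cos ρ) ^ k)⁻¹ * Real.sin ρ ^ (n - 1)

lemma denom_pos {mu : ℝ} (hmu : 1 < mu) (ρ : ℝ) : 0 < mu - Real.cos ρ := by
  have := Real.cos_le_one ρ; linarith

lemma cont_integrand (n k : ℕ) {mu : ℝ} (hmu : 1 < mu) :
    Continuous fun ρ => ((mu - Real.cos ρ) ^ k)⁻¹ * Real.sin ρ ^ (n - 1) := by
  exact (((continuous_const.sub Real.continuous_cos).pow k).inv₀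
    fun ρ => pow_ne_zero _ (denom_pos hmu ρ).ne').mul (Real.continuous_sin.pow _)

lemma hasDerivAt_inner (k : ℕ) (hk : 1 ≤ k) {x c : ℝ} (hd : 0 < x - c) (S : ℝ) :
    HasDerivAt (fun y : ℝ => ((y - c) ^ k)⁻¹ * S)
      (-(k : ℝ) * (((x - c) ^ (k + 1))⁻¹ * S)) x := by
  obtain ⟨j, rfl⟩ : ∃ j, k = j + 1 := ⟨k - 1, by omega⟩
  have h1 : HasDerivAt (fun y : ℝ => y - c) 1 x := (hasDerivAt_id x).sub_const c
  have h2 := (h1.pow (j + 1)).inv (pow_ne_zero _ hd.ne')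
  have h3 := h2.mul_const S
  refine h3.congr_deriv (Eq.symm ?_)
  have hdne : x - c ≠ 0 := hd.ne'
  simp only [Pi.pow_apply, Nat.add_sub_cancel]
  field_simp
  ring

lemma hasDerivAt_Ik (n k : ℕ) (hk : 1 ≤ k) {mu : ℝ} (hmu : 1 < mu) :
    HasDerivAt (Ik n k) (-(k : ℝ) * Ik n (k + 1) mu) mu := by
  have hε : (0:ℝ) < (mu - 1) / 2 := by linarith
  have hball : ∀ x ∈ Metric.ball mu ((mu - 1) / 2), 1 < x := by
    intro x hx
    rw [Metric.mem_ball, Real.dist_eq, abs_lt] at hx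
    linarith [hx.1]
  have key := intervalIntegral.hasDerivAt_integral_of_dominated_loc_of_deriv_le
    (F := fun x ρ => ((x - Real.cos ρ) ^ k)⁻¹ * Real.sin ρ ^ (n - 1))
    (F' := fun x ρ => -(k : ℝ) * (((x - Real.cos ρ) ^ (k + 1))⁻¹ * Real.sin ρ ^ (n - 1)))
    (x₀ := mu) (a := 0) (b := Real.pi) (μ := volume)
    (bound := fun _ => (k : ℝ) * (((mu - 1) / 2) ^ (k + 1))⁻¹) (Metric.ball_mem_nhds mu hε)
    ?_ ?_ ?_ ?_ ?_ ?_
  · have : (∫ ρ in (0:ℝ)..Real.pi,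
        -(k : ℝ) * (((mu - Real.cos ρ) ^ (k + 1))⁻¹ * Real.sin ρ ^ (n - 1)))
        = -(k : ℝ) * Ik n (k + 1) mu := intervalIntegral.integral_const_mul _ _
    rw [this] at key
    exact key.2
  · filter_upwards [eventually_gt_nhds hmu] with x hx
    exact (cont_integrand n k hx).aestronglyMeasurable
  · exact (cont_integrand n k hmu).intervalIntegrable 0 Real.pi
  · exact (continuous_const.mul (cont_integrand n (k + 1) hmu)).aestronglyMeasurable
  · refine Filter.Eventually.of_forall fun ρ _ => fun x hx => ?_
    have hx1 : 1 < x := hball x hx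
    have hd : 0 < x - Real.cos ρ := denom_pos hx1 ρ
    have hdlb : (mu - 1) / 2 ≤ x - Real.cos ρ := by
      rw [Metric.mem_ball, Real.dist_eq, abs_lt] at hx
      have := Real.cos_le_one ρ
      linarith [hx.1]
    have h1 : ‖-(k : ℝ) * (((x - Real.cos ρ) ^ (k + 1))⁻¹ * Real.sin ρ ^ (n - 1))‖
        = (k : ℝ) * (((x - Real.cos ρ) ^ (k + 1))⁻¹ * |Real.sin ρ| ^ (n - 1)) := by
      rw [Real.norm_eq_abs, abs_mul, abs_neg, abs_mul, abs_inv, abs_pow, abs_pow,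
        Nat.abs_cast, abs_of_pos hd]
    rw [h1]
    have h2 : ((x - Real.cos ρ) ^ (k + 1))⁻¹ ≤ (((mu - 1) / 2) ^ (k + 1))⁻¹ := by
      apply inv_anti₀ (pow_pos hε _)
      exact pow_le_pow_left₀ hε.le hdlb _
    have h3 : |Real.sin ρ| ^ (n - 1) ≤ 1 :=
      pow_le_one₀ (abs_nonneg _) (Real.abs_sin_le_one ρ)
    calc (k : ℝ) * (((x - Real.cos ρ) ^ (k + 1))⁻¹ * |Real.sin ρ| ^ (n - 1))
        ≤ (k : ℝ) * ((((mu - 1) / 2) ^ (k + 1))⁻¹ * 1) := by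
          apply mul_le_mul_of_nonneg_left _ (Nat.cast_nonneg _)
          exact mul_le_mul h2 h3 (by positivity) (by positivity)
      _ = (k : ℝ) * (((mu - 1) / 2) ^ (k + 1))⁻¹ := by ring
  · exact intervalIntegrable_const
  · refine Filter.Eventually.of_forall fun ρ _ => fun x hx => ?_
    exact hasDerivAt_inner k hk (denom_pos (hball x hx) ρ) _

noncomputable def Cn (n : ℕ) : ℝ :=
  (n : ℝ) * (volume (Metric.ball (0 : EuclideanSpace ℝ (Fin n)) 1)).toReal

lemma sFun_eq (n : ℕ) : sFun n = fun mu => Cn n * Ik n (n - 2) mu := rfl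

lemma hasDerivAt_sFun {n : ℕ} (hn : 3 ≤ n) {lam : ℝ} (hlam : 1 < lam) :
    HasDerivAt (sFun n) (Cn n * (-(((n : ℝ) - 2)) * Ik n (n - 1) lam)) lam := by
  have h := (hasDerivAt_Ik n (n - 2) (by omega) hlam).const_mul (Cn n)
  rw [sFun_eq]
  have h2 : n - 2 + 1 = n - 1 := by omega
  have h3 : ((n - 2 : ℕ) : ℝ) = (n : ℝ) - 2 := by
    push_cast [Nat.cast_sub (by omega : 2 ≤ n)]; ring
  rw [h2, h3] at h
  exact h

lemma deriv_sFun {n : ℕ} (hn : 3 ≤ n) {lam : ℝ} (hlam : 1 < lam) :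
    deriv (sFun n) lam = Cn n * (-(((n : ℝ) - 2)) * Ik n (n - 1) lam) :=
  (hasDerivAt_sFun hn hlam).deriv

lemma deriv2_sFun {n : ℕ} (hn : 3 ≤ n) {lam : ℝ} (hlam : 1 < lam) :
    deriv (deriv (sFun n)) lam = Cn n * ((((n : ℝ) - 2)) * (((n : ℝ) - 1)) * Ik n n lam) := by
  have heq : deriv (sFun n) =ᶠ[nhds lam]
      fun mu => (Cn n * (-(((n : ℝ) - 2)))) * Ik n (n - 1) mu := by
    filter_upwards [Ioi_mem_nhds hlam] with mu hmu
    rw [deriv_sFun hn hmu, mul_assoc]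
  rw [heq.deriv_eq]
  have h := (hasDerivAt_Ik n (n - 1) (by omega) hlam).const_mul (Cn n * (-(((n : ℝ) - 2))))
  have h2 : n - 1 + 1 = n := by omega
  rw [h2] at h
  rw [h.deriv]
  have : ((n - 1 : ℕ) : ℝ) = (n : ℝ) - 1 := by push_cast [Nat.cast_sub (by omega : 1 ≤ n)]; ring
  rw [this]; ring

lemma alg1 (m : ℕ) (s c L : ℝ) (hdne : L - c ≠ 0) (hsq : s^2 = 1 - c^2) :
    ((L-c)^(m+1))⁻¹ * s^(m+2) + ((m:ℝ)+1)*L*(((L-c)^(m+2))⁻¹*s^(m+2))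
      - ((m:ℝ)+2)*(L^2-1)*(((L-c)^(m+3))⁻¹*s^(m+2))
    = -( ((m:ℝ)+3)*s^(m+2)*c*((L-c)^(m+2))⁻¹
        + s^(m+3)*(-(((m:ℝ)+2)*(L-c)^(m+1)*s)/(((L-c)^(m+2))^2)) ) := by
  have h0 : ((L-c)^(m+2))⁻¹ = (L-c)^(m+2) * (((L-c)^(m+2))^2)⁻¹ := by
    field_simp
  have h1 : ((L-c)^(m+1))⁻¹ = (L-c)^(m+3) * (((L-c)^(m+2))^2)⁻¹ := by
    field_simp; ring
  have h3 : ((L-c)^(m+3))⁻¹ = (L-c)^(m+1) * (((L-c)^(m+2))^2)⁻¹ := by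
    field_simp; ring
  rw [h1, h0, h3, div_eq_mul_inv]
  generalize (((L-c)^(m+2))^2)⁻¹ = Y
  linear_combination (-((m:ℝ)+2) * s^(m+2) * (L-c)^(m+1) * Y) * hsq

lemma identityB {m : ℕ} {lam : ℝ} (hlam : 1 < lam) :
    Ik (m+3) (m+1) lam + ((m:ℝ)+1) * lam * Ik (m+3) (m+2) lam
      = ((m:ℝ)+2) * (lam^2 - 1) * Ik (m+3) (m+3) lam := by
  have hd : ∀ ρ : ℝ, 0 < lam - Real.cos ρ := denom_pos hlam
  -- antiderivative
  set F : ℝ → ℝ := fun ρ => -(Real.sin ρ ^ (m+3) * ((lam - Real.cos ρ) ^ (m+2))⁻¹) with hF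
  set G : ℝ → ℝ := fun ρ =>
      ((lam - Real.cos ρ) ^ (m+1))⁻¹ * Real.sin ρ ^ (m+2)
    + ((m:ℝ)+1) * lam * (((lam - Real.cos ρ) ^ (m+2))⁻¹ * Real.sin ρ ^ (m+2))
    - ((m:ℝ)+2) * (lam^2 - 1) * (((lam - Real.cos ρ) ^ (m+3))⁻¹ * Real.sin ρ ^ (m+2)) with hG
  have hGcont : Continuous G := by
    have c1 := cont_integrand (m+3) (m+1) hlam
    have c2 := cont_integrand (m+3) (m+2) hlam
    have c3 := cont_integrand (m+3) (m+3) hlam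
    simp only [show m+3-1 = m+2 from rfl] at c1 c2 c3
    exact (c1.add (continuous_const.mul c2)).sub (continuous_const.mul c3)
  have hderiv : ∀ ρ ∈ Set.Ioo (0:ℝ) Real.pi, HasDerivAt F (G ρ) ρ := by
    intro ρ _
    have h1 : HasDerivAt (fun ρ => Real.sin ρ ^ (m+3))
        (((m:ℝ)+3) * Real.sin ρ ^ (m+2) * Real.cos ρ) ρ := by
      have := (Real.hasDerivAt_sin ρ).pow (m+3)
      refine this.congr_deriv (Eq.symm ?_)
      push_cast; ring
    have hc : HasDerivAt (fun ρ => lam - Real.cos ρ) (Real.sin ρ) ρ := by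
      have := (Real.hasDerivAt_cos ρ).const_sub lam
      simpa using this
    have h2 := ((hc.pow (m+2)).inv (pow_ne_zero _ (hd ρ).ne')).mul_const (1:ℝ)
    have h2' : HasDerivAt (fun ρ => ((lam - Real.cos ρ) ^ (m+2))⁻¹)
        (-(((m:ℝ)+2) * (lam - Real.cos ρ) ^ (m+1) * Real.sin ρ) /
          ((lam - Real.cos ρ) ^ (m+2))^2) ρ := by
      have := (hc.pow (m+2)).inv (pow_ne_zero _ (hd ρ).ne')
      refine this.congr_deriv (Eq.symm ?_)
      simp only [Pi.pow_apply]
      push_cast; ring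
    have h3 := (h1.mul h2').neg
    refine h3.congr_deriv (Eq.symm ?_)
    exact alg1 m (Real.sin ρ) (Real.cos ρ) lam (hd ρ).ne' (Real.sin_sq ρ)
  have hint := intervalIntegral.integral_eq_sub_of_hasDerivAt_of_le Real.pi_pos.le
    (Continuous.continuousOn (by
      exact (Real.continuous_sin.pow (m+3)).mul
        (((continuous_const.sub Real.continuous_cos).pow (m+2)).inv₀
          fun ρ => pow_ne_zero _ (hd ρ).ne') |>.neg))
    hderiv (hGcont.intervalIntegrable 0 Real.pi)
  have hF0 : F 0 = 0 := by simp [hF]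
  have hFpi : F Real.pi = 0 := by simp [hF]
  rw [hF0, hFpi, sub_zero] at hint
  -- split the integral
  have c1 : IntervalIntegrable (fun ρ => ((lam - Real.cos ρ) ^ (m+1))⁻¹ * Real.sin ρ ^ (m+2)) volume 0 Real.pi := by
    have := cont_integrand (m+3) (m+1) hlam
    simp only [show m+3-1 = m+2 from rfl] at this
    exact this.intervalIntegrable 0 Real.pi
  have c2 : IntervalIntegrable (fun ρ => ((lam - Real.cos ρ) ^ (m+2))⁻¹ * Real.sin ρ ^ (m+2)) volume 0 Real.pi := by
    have := cont_integrand (m+3) (m+2) hlam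
    simp only [show m+3-1 = m+2 from rfl] at this
    exact this.intervalIntegrable 0 Real.pi
  have c3 : IntervalIntegrable (fun ρ => ((lam - Real.cos ρ) ^ (m+3))⁻¹ * Real.sin ρ ^ (m+2)) volume 0 Real.pi := by
    have := cont_integrand (m+3) (m+3) hlam
    simp only [show m+3-1 = m+2 from rfl] at this
    exact this.intervalIntegrable 0 Real.pi
  have hsplit : (∫ ρ in (0:ℝ)..Real.pi, G ρ)
      = Ik (m+3) (m+1) lam + ((m:ℝ)+1) * lam * Ik (m+3) (m+2) lam
        - ((m:ℝ)+2) * (lam^2-1) * Ik (m+3) (m+3) lam := by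
    simp only [hG]
    rw [intervalIntegral.integral_sub (c1.add (c2.const_mul _)) (c3.const_mul _),
      intervalIntegral.integral_add c1 (c2.const_mul _),
      intervalIntegral.integral_const_mul, intervalIntegral.integral_const_mul]
    rfl
  rw [hsplit] at hint
  linarith [hint]

lemma alg2 (m : ℕ) (q s d : ℝ) (hq : q ≠ 0) (hs : s ≠ 0) (hd : d ≠ 0) :
    q ^ (m+3) * ((d^(m+3))⁻¹ * s^(m+2))
      = (q*s/d)^(m+2) * (-(1/(q*s/d)) * (-s * q^2 / d^2)) := by
  rw [div_pow, mul_pow]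
  field_simp
  ring

lemma identityA {m : ℕ} {lam : ℝ} (hlam : 1 < lam) :
    (Real.sqrt (lam^2 - 1)) ^ (m+3) * Ik (m+3) (m+3) lam
      = ∫ t in (0:ℝ)..Real.pi, Real.sin t ^ (m+2) := by
  have hq2 : (Real.sqrt (lam^2 - 1))^2 = lam^2 - 1 := Real.sq_sqrt (by nlinarith)
  have hqpos : 0 < Real.sqrt (lam^2 - 1) := Real.sqrt_pos.2 (by nlinarith)
  set q : ℝ := Real.sqrt (lam^2 - 1) with hqdef
  have hd : ∀ ρ : ℝ, 0 < lam - Real.cos ρ := denom_pos hlam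
  set W : ℝ → ℝ := fun x => ∫ t in (0:ℝ)..x, Real.sin t ^ (m+2) with hWdef
  have hWc : Continuous fun t : ℝ => Real.sin t ^ (m+2) := Real.continuous_sin.pow _
  have hW : ∀ x : ℝ, HasDerivAt W (Real.sin x ^ (m+2)) x := fun x =>
    intervalIntegral.integral_hasDerivAt_right (hWc.intervalIntegrable 0 x)
      (hWc.stronglyMeasurable.stronglyMeasurableAtFilter) hWc.continuousAt
  have hWcont : Continuous W := continuous_iff_continuousAt.2 fun x => (hW x).continuousAt
  set ψ : ℝ → ℝ := fun ρ => (lam * Real.cos ρ - 1) / (lam - Real.cos ρ) with hψdef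
  have hψcont : Continuous ψ :=
    ((continuous_const.mul Real.continuous_cos).sub continuous_const).div
      (continuous_const.sub Real.continuous_cos) (fun ρ => (hd ρ).ne')
  set Φ : ℝ → ℝ := fun ρ => Real.arccos (ψ ρ) with hΦdef
  have hΦcont : Continuous Φ := Real.continuous_arccos.comp hψcont
  set f : ℝ → ℝ := fun ρ => W (Φ ρ) - W ρ with hfdef
  have hfcont : Continuous f := (hWcont.comp hΦcont).sub hWcont
  set g : ℝ → ℝ := fun ρ =>
    q^(m+3) * (((lam - Real.cos ρ)^(m+3))⁻¹ * Real.sin ρ^(m+2)) - Real.sin ρ^(m+2) with hgdef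
  have hgi : IntervalIntegrable
      (fun ρ => ((lam - Real.cos ρ)^(m+3))⁻¹ * Real.sin ρ^(m+2)) volume 0 Real.pi := by
    exact ((((continuous_const.sub Real.continuous_cos).pow (m+3)).inv₀
      fun ρ => pow_ne_zero _ (hd ρ).ne').mul (Real.continuous_sin.pow _)).intervalIntegrable 0 _
  have hgcont : Continuous g := by
    exact (continuous_const.mul ((((continuous_const.sub Real.continuous_cos).pow (m+3)).inv₀
      fun ρ => pow_ne_zero _ (hd ρ).ne').mul (Real.continuous_sin.pow _))).sub hWc
  have hderiv : ∀ ρ ∈ Set.Ioo (0:ℝ) Real.pi, HasDerivAt f (g ρ) ρ := by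
    intro ρ hρ
    have hs : 0 < Real.sin ρ := Real.sin_pos_of_pos_of_lt_pi hρ.1 hρ.2
    have hpyth := Real.sin_sq_add_cos_sq ρ
    have hc1 : Real.cos ρ < 1 := by nlinarith
    have hcm1 : -1 < Real.cos ρ := by nlinarith
    have hψlt : ψ ρ < 1 := by
      rw [hψdef]; simp only
      rw [div_lt_one (hd ρ)]; nlinarith
    have hψgt : -1 < ψ ρ := by
      rw [hψdef]; simp only
      rw [lt_div_iff₀ (hd ρ)]; nlinarith
    have hψ' : HasDerivAt ψ (-(Real.sin ρ) * (lam^2 - 1) / (lam - Real.cos ρ)^2) ρ := by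
      have h1 : HasDerivAt (fun ρ => lam * Real.cos ρ - 1) (lam * (-Real.sin ρ)) ρ :=
        ((Real.hasDerivAt_cos ρ).const_mul lam).sub_const 1
      have h2 : HasDerivAt (fun ρ => lam - Real.cos ρ) (Real.sin ρ) ρ := by
        simpa using (Real.hasDerivAt_cos ρ).const_sub lam
      have h3 := h1.div h2 (hd ρ).ne'
      refine h3.congr_deriv (Eq.symm ?_)
      field_simp
      ring
    have harc : HasDerivAt Real.arccos (-(1 / Real.sqrt (1 - ψ ρ^2))) (ψ ρ) :=
      Real.hasDerivAt_arccos hψgt.ne' hψlt.ne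
    have hΦ' : HasDerivAt Φ
        (-(1 / Real.sqrt (1 - ψ ρ^2)) * (-(Real.sin ρ) * (lam^2 - 1) / (lam - Real.cos ρ)^2))
        ρ := harc.comp ρ hψ'
    have hu : Real.sqrt (1 - ψ ρ^2) = q * Real.sin ρ / (lam - Real.cos ρ) := by
      have h1 : 1 - ψ ρ^2 = (q * Real.sin ρ / (lam - Real.cos ρ))^2 := by
        rw [hψdef]; simp only
        rw [div_pow, div_pow, mul_pow, hq2]
        rw [eq_div_iff (pow_ne_zero 2 (hd ρ).ne'), sub_mul,
          div_mul_cancel₀ _ (pow_ne_zero 2 (hd ρ).ne')]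
        linear_combination (-(lam^2-1)) * hpyth
      have hposqsd : 0 < q * Real.sin ρ / (lam - Real.cos ρ) :=
        div_pos (mul_pos hqpos hs) (hd ρ)
      rw [h1, Real.sqrt_sq hposqsd.le]
    have htot := ((hW (Φ ρ)).comp ρ hΦ').sub (hW ρ)
    refine htot.congr_deriv (Eq.symm ?_)
    rw [hgdef]; simp only
    rw [hΦdef]; simp only
    rw [Real.sin_arccos, hu]
    rw [show lam^2 - 1 = q^2 from hq2.symm]
    rw [sub_left_inj]
    exact alg2 m q (Real.sin ρ) (lam - Real.cos ρ) hqpos.ne' hs.ne' (hd ρ).ne'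
  have hint := intervalIntegral.integral_eq_sub_of_hasDerivAt_of_le Real.pi_pos.le
    hfcont.continuousOn hderiv (hgcont.intervalIntegrable 0 Real.pi)
  have hf0 : f 0 = 0 := by
    rw [hfdef]; simp only
    have : ψ 0 = 1 := by
      rw [hψdef]; simp only [Real.cos_zero, mul_one]
      rw [div_self (by intro h; rw [sub_eq_zero] at h; exact (ne_of_gt hlam) h)]
    rw [hΦdef]; simp only [this, Real.arccos_one]
    ring
  have hfpi : f Real.pi = 0 := by
    rw [hfdef]; simp only
    have : ψ Real.pi = -1 := by
      rw [hψdef]; simp only [Real.cos_pi, mul_neg_one]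
      rw [show -lam - 1 = -(lam + 1) by ring, show lam - (-1) = lam + 1 by ring,
        neg_div, div_self (by positivity)]
    rw [hΦdef]; simp only [this, Real.arccos_neg_one]
    ring
  rw [hf0, hfpi, sub_zero] at hint
  have hsplit : (∫ ρ in (0:ℝ)..Real.pi, g ρ)
      = q^(m+3) * Ik (m+3) (m+3) lam - ∫ t in (0:ℝ)..Real.pi, Real.sin t ^ (m+2) := by
    rw [hgdef]
    rw [intervalIntegral.integral_sub (hgi.const_mul _) (hWc.intervalIntegrable 0 Real.pi),
      intervalIntegral.integral_const_mul]
    rfl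
  rw [hsplit] at hint
  linarith [hint]

lemma rpow_final {om q N : ℝ} (hom : 0 < om) (hq : 0 < q) (hN : 2 < N) :
    (om * (q ^ N)⁻¹) ^ ((N - 2)/N) = om ^ (-(2:ℝ)/N) * om * ((q ^ N)⁻¹ * q ^ (2:ℝ)) := by
  have hNne : N ≠ 0 := by linarith
  have e1 : (q ^ N)⁻¹ = q ^ (-N) := by rw [← Real.rpow_neg hq.le]
  rw [e1, Real.mul_rpow hom.le (Real.rpow_nonneg hq.le _), ← Real.rpow_mul hq.le,
    ← Real.rpow_add hq, show -N * ((N - 2)/N) = -N + 2 by field_simp; ring]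
  nth_rewrite 3 [show om = om ^ (1:ℝ) from (Real.rpow_one om).symm]
  rw [← Real.rpow_add hom, show -(2:ℝ)/N + 1 = (N - 2)/N by field_simp; ring]

end Stmt8Aux

/-- The spherical integral s(λ) satisfies, for every λ > 1, the ODE
[s''(λ)/((n−2)(n−1))]^((n−2)/n)
  = (2/n)·ω_n^(−2/n)·[((1−λ²)/(2(n−1)))s''(λ) − λs'(λ) + s(λ)],
expressing that u_λ = (λ − cos d₀)^(1−n/2) is extremal for the sharp Sobolev
inequality on 𝕊ⁿ. -/
theorem stmt_8 (n : ℕ) (hn : 3 ≤ n) :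
    ∀ lam : ℝ, 1 < lam →
      (deriv (deriv (sFun n)) lam / (((n : ℝ) - 2) * ((n : ℝ) - 1))) ^ (((n : ℝ) - 2) / n) =
        (2 / (n : ℝ)) * sphereVol n ^ (-(2 : ℝ) / n) *
          ((1 - lam ^ 2) / (2 * ((n : ℝ) - 1)) * deriv (deriv (sFun n)) lam -
            lam * deriv (sFun n) lam + sFun n lam) := by
  intro lam hlam
  obtain ⟨m, rfl⟩ : ∃ m, n = m + 3 := ⟨n - 3, by omega⟩
  have hq2 : (Real.sqrt (lam^2 - 1))^2 = lam^2 - 1 := Real.sq_sqrt (by nlinarith)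
  have hqpos : 0 < Real.sqrt (lam^2 - 1) := Real.sqrt_pos.2 (by nlinarith)
  set q : ℝ := Real.sqrt (lam^2 - 1) with hqdef
  set J : ℝ := ∫ t in (0:ℝ)..Real.pi, Real.sin t ^ (m+2) with hJdef
  have hJpos : 0 < J := by
    rw [hJdef]
    apply intervalIntegral.intervalIntegral_pos_of_pos_on
      ((Real.continuous_sin.pow (m+2)).intervalIntegrable 0 Real.pi)
      (fun x hx => pow_pos (Real.sin_pos_of_pos_of_lt_pi hx.1 hx.2) _) Real.pi_pos
  have hCpos : 0 < Cn (m+3) := by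
    have h1 : (0:ℝ) < ((m+3:ℕ) : ℝ) := by positivity
    have h2 := Metric.measure_ball_pos volume (0 : EuclideanSpace ℝ (Fin (m+3))) one_pos
    have h3 : volume (Metric.ball (0 : EuclideanSpace ℝ (Fin (m+3))) 1) < ⊤ :=
      measure_ball_lt_top
    exact mul_pos h1 (ENNReal.toReal_pos h2.ne' h3.ne)
  have hA := identityA (m := m) hlam
  have hB := identityB (m := m) hlam
  have hIn : Ik (m+3) (m+3) lam = J * (q^(m+3))⁻¹ := by
    have hQ : q^(m+3) ≠ 0 := pow_ne_zero _ hqpos.ne'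
    field_simp
    linarith [hA]
  have hω : sphereVol (m+3) = Cn (m+3) * J := rfl
  have hωpos : 0 < sphereVol (m+3) := by rw [hω]; exact mul_pos hCpos hJpos
  have hs0 : sFun (m+3) lam = Cn (m+3) * Ik (m+3) (m+1) lam := rfl
  rw [deriv_sFun (by omega) hlam, deriv2_sFun (by omega) hlam, hs0]
  rw [show (m+3) - 1 = m + 2 from rfl]
  have hCI : Cn (m+3) * Ik (m+3) (m+3) lam = sphereVol (m+3) * (q^(m+3))⁻¹ := by
    rw [hω, hIn]; ring
  -- simplify the base of the lhs
  have hN2 : ((m+3:ℕ):ℝ) - 2 = (m:ℝ) + 1 := by push_cast; ring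
  have hN1 : ((m+3:ℕ):ℝ) - 1 = (m:ℝ) + 2 := by push_cast; ring
  have hNc : ((m+3:ℕ):ℝ) = (m:ℝ) + 3 := by push_cast; ring
  rw [hN2, hN1, hNc]
  have hbase : Cn (m+3) * (((m:ℝ)+1) * ((m:ℝ)+2) * Ik (m+3) (m+3) lam)
      / (((m:ℝ)+1) * ((m:ℝ)+2)) = Cn (m+3) * Ik (m+3) (m+3) lam := by
    field_simp
  have hbr : (1 - lam ^ 2) / (2 * ((m:ℝ) + 2)) *
        (Cn (m+3) * (((m:ℝ)+1) * ((m:ℝ)+2) * Ik (m+3) (m+3) lam)) -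
        lam * (Cn (m+3) * (-((m:ℝ)+1) * Ik (m+3) (m+2) lam)) +
        Cn (m+3) * Ik (m+3) (m+1) lam
      = Cn (m+3) * Ik (m+3) (m+3) lam * (lam^2 - 1) * ((m:ℝ)+3) / 2 := by
    have hI1 : Ik (m+3) (m+1) lam
        = ((m:ℝ)+2) * (lam^2 - 1) * Ik (m+3) (m+3) lam
          - ((m:ℝ)+1) * lam * Ik (m+3) (m+2) lam := by linarith [hB]
    rw [hI1]
    have h2 : ((m:ℝ) + 2) ≠ 0 := by positivity
    field_simp
    ring
  rw [hbase, hbr, hCI]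
  rw [show lam^2 - 1 = q^(2:ℝ) by rw [← hq2]; norm_num [Real.rpow_natCast q 2]]
  have hqN : (q : ℝ)^(m+3) = q ^ (((m:ℝ)+3) : ℝ) := by
    rw [← Real.rpow_natCast q (m+3)]; push_cast; ring_nf
  rw [hqN]
  rw [show ((m:ℝ)+1)/((m:ℝ)+3) = (((m:ℝ)+3)-2)/((m:ℝ)+3) by ring_nf]
  rw [rpow_final hωpos hqpos (by linarith : (2:ℝ) < (m:ℝ)+3)]
  have hNne : ((m:ℝ)+3) ≠ 0 := by positivity
  field_simp
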